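/- Let X be a normal space of covering dimension at most n, and let y ∈ ℝ^{n+1}. Then for every continuous f : X → ℝ^{n+1} and continuous ε : X → ℝ_{>0}, there exists continuous g : X → ℝ^{n+1} with ‖f(x) − g(x)‖ < ε(x) and g(x) ≠ y for all x ∈ X. -/
import Mathlib

set_option synthInstance.maxHeartbeats 1000000
set_option maxHeartbeats 4000000
open Set Function MeasureTheory



/-- Covering dimension at most `n`: every open cover has an open refinement in which
each point lies in at most `n + 1` members. -/
def CovDimLE (X : Type) [TopologicalSpace X] (n : ℕ) : Prop :=
  ∀ 𝒰 : Set (Set X), (∀ U ∈ 𝒰, IsOpen U) → ⋃₀ 𝒰 = Set.univ →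
    ∃ 𝒱 : Set (Set X), (∀ V ∈ 𝒱, IsOpen V) ∧ ⋃₀ 𝒱 = Set.univ ∧
      (∀ V ∈ 𝒱, ∃ U ∈ 𝒰, V ⊆ U) ∧
      ∀ x : X, {V ∈ 𝒱 | x ∈ V}.Finite ∧ {V ∈ 𝒱 | x ∈ V}.ncard ≤ n + 1



lemma aux_aff_ne_top {m : ℕ} (S : Finset (EuclideanSpace ℝ (Fin (m+1)))) (hS : S.card ≤ m + 1) :
    affineSpan ℝ (S : Set (EuclideanSpace ℝ (Fin (m+1)))) ≠ ⊤ := by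
  classical
  intro htop
  rcases S.eq_empty_or_nonempty with rfl | ⟨p, hp⟩
  · simp at htop
  · have hvs : vectorSpan ℝ (S : Set (EuclideanSpace ℝ (Fin (m+1)))) = ⊤ := by
      rw [← direction_affineSpan, htop, AffineSubspace.direction_top]
    rw [vectorSpan_eq_span_vsub_set_right_ne ℝ (Finset.mem_coe.2 hp)] at hvs
    have hcoe : ((S : Set (EuclideanSpace ℝ (Fin (m+1)))) \ {p}) = ↑(S.erase p) := by
      rw [Finset.coe_erase]
    rw [hcoe, ← Finset.coe_image] at hvs
    have h1 : Module.finrank ℝ (Submodule.span ℝ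
        (((S.erase p).image (· -ᵥ p) : Finset (EuclideanSpace ℝ (Fin (m+1)))) :
          Set (EuclideanSpace ℝ (Fin (m+1))))) ≤ (S.erase p).card :=
      le_trans (finrank_span_finset_le_card _) (Finset.card_image_le)
    rw [hvs] at h1
    have h2 : (S.erase p).card ≤ m := by
      have := Finset.card_erase_of_mem hp
      omega
    have h3 : Module.finrank ℝ (⊤ : Submodule ℝ (EuclideanSpace ℝ (Fin (m+1)))) = m + 1 := by
      rw [finrank_top]
      simp [finrank_euclideanSpace_fin]
    omega


lemma aux_exchange {V : Type*} [NormedAddCommGroup V] [NormedSpace ℝ V]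
    {s : Set V} {c y : V} (h1 : y ∉ affineSpan ℝ s)
    (h2 : y ∈ affineSpan ℝ (insert c s)) : c ∈ affineSpan ℝ (insert y s) := by
  rcases s.eq_empty_or_nonempty with rfl | ⟨p1, hp1⟩
  · have : y = c := by
      simpa [AffineSubspace.mem_affineSpan_singleton] using h2
    rw [← this]
    exact mem_affineSpan ℝ (Set.mem_insert _ _)
  · have hp1' : p1 ∈ affineSpan ℝ s := mem_affineSpan ℝ hp1
    rw [← affineSpan_insert_affineSpan] at h2
    rw [AffineSubspace.mem_affineSpan_insert_iff hp1'] at h2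
    obtain ⟨r, p0, hp0, heq⟩ := h2
    have hr : r ≠ 0 := by
      rintro rfl
      apply h1
      rw [heq]
      simpa using hp0
    rw [← affineSpan_insert_affineSpan, AffineSubspace.mem_affineSpan_insert_iff hp1']
    refine ⟨r⁻¹, r⁻¹ • (p1 -ᵥ p0) +ᵥ p1, AffineSubspace.smul_vsub_vadd_mem _ r⁻¹ hp1' hp0 hp1', ?_⟩
    subst heq
    simp only [vsub_eq_sub, vadd_eq_add]
    match_scalars <;> field_simp <;> ring
lemma aux_exists_genpos {m : ℕ} (y : EuclideanSpace ℝ (Fin (m+1)))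
    (B : ℕ → Set (EuclideanSpace ℝ (Fin (m+1))))
    (hBo : ∀ k, IsOpen (B k)) (hBne : ∀ k, (B k).Nonempty) :
    ∃ c : ℕ → EuclideanSpace ℝ (Fin (m+1)), (∀ k, c k ∈ B k) ∧
      ∀ s : Finset ℕ, s.card ≤ m + 1 →
        y ∉ affineSpan ℝ (c '' (s : Set ℕ)) := by
  classical
  let bad : Finset (EuclideanSpace ℝ (Fin (m+1))) → Set (EuclideanSpace ℝ (Fin (m+1))) := fun P =>
    ⋃ S ∈ P.powerset, if S.card ≤ m then
      (affineSpan ℝ (insert y (S : Set (EuclideanSpace ℝ (Fin (m+1))))) :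
        Set (EuclideanSpace ℝ (Fin (m+1)))) else ∅
  have hbadnull : ∀ P, MeasureTheory.volume (bad P) = 0 := by
    intro P
    refine MeasureTheory.measure_biUnion_null_iff
      (P.powerset : Finset (Finset (EuclideanSpace ℝ (Fin (m+1))))).countable_toSet |>.2 ?_
    intro S _
    by_cases hcard : S.card ≤ m
    · rw [if_pos hcard]
      refine MeasureTheory.Measure.addHaar_affineSubspace _ _ ?_
      have h : (insert y (S : Set (EuclideanSpace ℝ (Fin (m+1))))) =
          ((insert y S : Finset (EuclideanSpace ℝ (Fin (m+1)))) :
            Set (EuclideanSpace ℝ (Fin (m+1)))) := by simp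
      rw [h]
      exact aux_aff_ne_top _ (le_trans (Finset.card_insert_le _ _) (by omega))
    · rw [if_neg hcard]; simp
  have hex : ∀ (P : Finset (EuclideanSpace ℝ (Fin (m+1)))) (k : ℕ),
      ∃ cc, cc ∈ B k ∧ cc ∉ bad P := by
    intro P k
    by_contra h
    push_neg at h
    have hsub : B k ⊆ bad P := fun x hx => h x hx
    have hpos := (hBo k).measure_pos MeasureTheory.volume (hBne k)
    have hzero : MeasureTheory.volume (B k) = 0 :=
      MeasureTheory.measure_mono_null hsub (hbadnull P)
    rw [hzero] at hpos
    exact lt_irrefl _ hpos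
  let F : ℕ → Finset (EuclideanSpace ℝ (Fin (m+1))) := fun k =>
    Nat.rec ∅ (fun k Fk => insert (Classical.choose (hex Fk k)) Fk) k
  let c : ℕ → EuclideanSpace ℝ (Fin (m+1)) := fun k => Classical.choose (hex (F k) k)
  have hFsucc : ∀ k, F (k + 1) = insert (c k) (F k) := fun k => rfl
  have hcB : ∀ k, c k ∈ B k := fun k => (Classical.choose_spec (hex (F k) k)).1
  have hcbad : ∀ k, c k ∉ bad (F k) := fun k => (Classical.choose_spec (hex (F k) k)).2
  have hmono : ∀ j k, j < k → c j ∈ F k := by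
    intro j k
    induction k with
    | zero => omega
    | succ k ih =>
      intro hjk
      rw [hFsucc]
      rcases Nat.lt_succ_iff_lt_or_eq.1 hjk with h | h
      · exact Finset.mem_insert_of_mem (ih h)
      · subst h; exact Finset.mem_insert_self _ _
  have hinv : ∀ k, ∀ S : Finset (EuclideanSpace ℝ (Fin (m+1))), S ⊆ F k → S.card ≤ m + 1 →
      y ∉ affineSpan ℝ (S : Set (EuclideanSpace ℝ (Fin (m+1)))) := by
    intro k
    induction k with
    | zero =>
      intro S hS _
      have : F 0 = ∅ := rfl
      rw [this] at hS
      rw [Finset.subset_empty.1 hS]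
      simp only [Finset.coe_empty, AffineSubspace.span_empty]
      exact AffineSubspace.notMem_bot ℝ (EuclideanSpace ℝ (Fin (m+1))) y
    | succ k ih =>
      intro S hS hcard hy
      rw [hFsucc] at hS
      by_cases hmem : c k ∈ S
      · have hpos : 1 ≤ S.card := Finset.card_pos.2 ⟨_, hmem⟩
        have hS'sub : S.erase (c k) ⊆ F k := by
          intro a ha
          have haS := Finset.mem_of_mem_erase ha
          have hane := Finset.ne_of_mem_erase ha
          rcases Finset.mem_insert.1 (hS haS) with h | h
          · exact absurd h hane
          · exact h
        have hS'card : (S.erase (c k)).card ≤ m := by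
          have := Finset.card_erase_of_mem hmem
          omega
        have hyS' : y ∉ affineSpan ℝ ((S.erase (c k) : Finset (EuclideanSpace ℝ (Fin (m+1)))) :
            Set (EuclideanSpace ℝ (Fin (m+1)))) := ih _ hS'sub (by omega)
        have hcoeS : (S : Set (EuclideanSpace ℝ (Fin (m+1)))) =
            insert (c k) ((S.erase (c k) : Finset (EuclideanSpace ℝ (Fin (m+1)))) :
              Set (EuclideanSpace ℝ (Fin (m+1)))) := by
          rw [Finset.coe_erase, Set.insert_diff_singleton]
          exact (Set.insert_eq_self.2 hmem).symm
        rw [hcoeS] at hy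
        have hck := aux_exchange hyS' hy
        apply hcbad k
        refine Set.mem_biUnion (Finset.mem_powerset.2 hS'sub) ?_
        rw [if_pos hS'card]
        exact hck
      · have hsub : S ⊆ F k := by
          intro a ha
          rcases Finset.mem_insert.1 (hS ha) with h | h
          · exact absurd (h ▸ ha) hmem
          · exact h
        exact ih S hsub hcard hy
  refine ⟨c, hcB, ?_⟩
  intro s hs
  have himg : ((s.image c : Finset (EuclideanSpace ℝ (Fin (m+1)))) :
      Set (EuclideanSpace ℝ (Fin (m+1)))) = c '' (s : Set ℕ) := Finset.coe_image
  rw [← himg]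
  apply hinv (s.sup id + 1)
  · intro a ha
    obtain ⟨j, hj, rfl⟩ := Finset.mem_image.1 ha
    exact hmono j _ (Nat.lt_succ_of_le (Finset.le_sup (f := id) hj))
  · exact le_trans Finset.card_image_le hs
lemma aux_refine {n : ℕ} {X : Type} [TopologicalSpace X] (hdim : CovDimLE X n)
    (D : ℕ → Set X) (hDo : ∀ k, IsOpen (D k)) (hDcov : ∀ x, ∃ k, x ∈ D k) :
    ∃ W : ℕ → Set X, (∀ k, IsOpen (W k)) ∧ (∀ k, W k ⊆ D k) ∧ (∀ x, ∃ k, x ∈ W k) ∧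
      ∀ x, {k | x ∈ W k}.Finite ∧ {k | x ∈ W k}.ncard ≤ n + 1 := by
  classical
  obtain ⟨𝒱, hVo, hVcov, hVref, hVfin⟩ := hdim (Set.range D)
    (by rintro U ⟨k, rfl⟩; exact hDo k)
    (by
      rw [Set.sUnion_range]
      exact Set.eq_univ_of_forall fun x => Set.mem_iUnion.2 (hDcov x))
  have hj : ∀ V, V ∈ 𝒱 → ∃ k, V ⊆ D k := by
    intro V hV
    obtain ⟨U, hU, hVU⟩ := hVref V hV
    obtain ⟨k, rfl⟩ := hU
    exact ⟨k, hVU⟩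
  choose! j hjD using hj
  refine ⟨fun k => ⋃₀ {V | V ∈ 𝒱 ∧ j V = k}, ?_, ?_, ?_, ?_⟩
  · intro k
    exact isOpen_sUnion fun V hV => hVo V hV.1
  · rintro k z ⟨V, ⟨hV, rfl⟩, hzV⟩
    exact hjD V hV hzV
  · intro x
    have : x ∈ ⋃₀ 𝒱 := by rw [hVcov]; trivial
    obtain ⟨V, hV, hxV⟩ := this
    exact ⟨j V, V, ⟨hV, rfl⟩, hxV⟩
  · intro x
    have hch : ∀ k ∈ {k | x ∈ ⋃₀ {V | V ∈ 𝒱 ∧ j V = k}}, ∃ V, (V ∈ 𝒱 ∧ j V = k) ∧ x ∈ V := by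
      intro k hk
      obtain ⟨V, hV, hxV⟩ := hk
      exact ⟨V, hV, hxV⟩
    choose! VV hVV using hch
    have hmaps : ∀ k ∈ {k | x ∈ ⋃₀ {V | V ∈ 𝒱 ∧ j V = k}}, VV k ∈ {V ∈ 𝒱 | x ∈ V} := by
      intro k hk
      exact ⟨(hVV k hk).1.1, (hVV k hk).2⟩
    have hinj : Set.InjOn VV {k | x ∈ ⋃₀ {V | V ∈ 𝒱 ∧ j V = k}} := by
      intro a ha b hb hab
      have h1 := (hVV a ha).1.2
      have h2 := (hVV b hb).1.2
      rw [← h1, ← h2, hab]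
    have hfin := (hVfin x).1
    constructor
    · exact Set.Finite.of_finite_image
        (hfin.subset (by rintro _ ⟨k, hk, rfl⟩; exact hmaps k hk)) hinj
    · exact le_trans (Set.ncard_le_ncard_of_injOn VV hmaps hinj hfin) (hVfin x).2
lemma aux_locfin {X : Type} [TopologicalSpace X] [NormalSpace X] (W : ℕ → Set X)
    (hWo : ∀ k, IsOpen (W k)) (hWcov : ∀ x, ∃ k, x ∈ W k)
    (hWfin : ∀ x, {k | x ∈ W k}.Finite) :
    ∃ W' : ℕ → Set X, (∀ k, IsOpen (W' k)) ∧ (∀ k, W' k ⊆ W k) ∧ (∀ x, ∃ k, x ∈ W' k) ∧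
      LocallyFinite W' := by
  classical
  obtain ⟨S, hScov, hSo, hScl⟩ := exists_iUnion_eq_closure_subset hWo hWfin
    (Set.eq_univ_of_forall fun x => Set.mem_iUnion.2 (hWcov x))
  refine ⟨fun k => W k \ ⋃ (j : ℕ) (_ : j < k), closure (S j), ?_, ?_, ?_, ?_⟩
  · intro k
    refine (hWo k).sdiff ?_
    exact Set.Finite.isClosed_biUnion (Set.finite_Iio k) fun j _ => isClosed_closure
  · intro k
    exact Set.diff_subset
  · intro x
    have hex : ∃ k, x ∈ closure (S k) := by
      have : x ∈ ⋃ k, S k := by rw [hScov]; trivial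
      obtain ⟨k, hk⟩ := Set.mem_iUnion.1 this
      exact ⟨k, subset_closure hk⟩
    refine ⟨Nat.find hex, hScl _ (Nat.find_spec hex), ?_⟩
    simp only [Set.mem_iUnion, not_exists]
    intro j hj
    exact Nat.find_min hex hj
  · intro x
    have : x ∈ ⋃ k, S k := by rw [hScov]; trivial
    obtain ⟨N, hN⟩ := Set.mem_iUnion.1 this
    refine ⟨S N, (hSo N).mem_nhds hN, ?_⟩
    refine Set.Finite.subset (Set.finite_le_nat N) ?_
    rintro k ⟨z, hz1, hz2⟩
    by_contra hk
    simp only [Set.mem_setOf_eq, not_le] at hk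
    apply hz1.2
    exact Set.mem_biUnion hk (subset_closure hz2)
lemma aux_cover {n : ℕ} {X : Type} [TopologicalSpace X]
    (f : X → EuclideanSpace ℝ (Fin (n + 1))) (hf : Continuous f)
    (ε : X → ℝ) (hε : Continuous ε) (hεpos : ∀ x, 0 < ε x) :
    ∃ (D : ℕ → Set X) (B : ℕ → Set (EuclideanSpace ℝ (Fin (n + 1)))),
      (∀ k, IsOpen (D k)) ∧ (∀ k, IsOpen (B k)) ∧ (∀ k, (B k).Nonempty) ∧
      (∀ x, ∃ k, x ∈ D k) ∧
      (∀ k, ∀ z ∈ D k, ∀ cc ∈ B k, ‖f z - cc‖ < ε z / 2) := by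
  classical
  obtain ⟨T, hTc, hTd⟩ :=
    TopologicalSpace.exists_countable_dense (EuclideanSpace ℝ (Fin (n + 1)))
  have : Countable ↥T := hTc.to_subtype
  have : Nonempty ↥T := hTd.nonempty.to_subtype
  obtain ⟨u, hu⟩ := exists_surjective_nat (↥T × ℚ)
  refine ⟨fun k => {z | ‖f z - ((u k).1 : EuclideanSpace ℝ (Fin (n+1)))‖ < ε z / 4 ∧
      (((u k).2 : ℝ) < ε z ∧ ε z < 2 * ((u k).2 : ℝ))},
    fun k => Metric.ball ((u k).1 : EuclideanSpace ℝ (Fin (n+1)))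
      (if 0 < ((u k).2 : ℝ) then ((u k).2 : ℝ) / 4 else 1),
    ?_, ?_, ?_, ?_, ?_⟩
  · intro k
    have h1 : IsOpen {z : X | ‖f z - ((u k).1 : EuclideanSpace ℝ (Fin (n+1)))‖ < ε z / 4} :=
      isOpen_lt ((hf.sub continuous_const).norm) (hε.div_const 4)
    have h2 : IsOpen {z : X | ((u k).2 : ℝ) < ε z} := isOpen_lt continuous_const hε
    have h3 : IsOpen {z : X | ε z < 2 * ((u k).2 : ℝ)} := isOpen_lt hε continuous_const
    have : {z : X | ‖f z - ((u k).1 : EuclideanSpace ℝ (Fin (n+1)))‖ < ε z / 4 ∧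
        (((u k).2 : ℝ) < ε z ∧ ε z < 2 * ((u k).2 : ℝ))} =
        {z : X | ‖f z - ((u k).1 : EuclideanSpace ℝ (Fin (n+1)))‖ < ε z / 4} ∩
        ({z : X | ((u k).2 : ℝ) < ε z} ∩ {z : X | ε z < 2 * ((u k).2 : ℝ)}) := rfl
    show IsOpen {z : X | ‖f z - ((u k).1 : EuclideanSpace ℝ (Fin (n+1)))‖ < ε z / 4 ∧
      (((u k).2 : ℝ) < ε z ∧ ε z < 2 * ((u k).2 : ℝ))}
    rw [this]
    exact h1.inter (h2.inter h3)
  · intro k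
    exact Metric.isOpen_ball
  · intro k
    apply Metric.nonempty_ball.2
    split_ifs with h
    · linarith
    · norm_num
  · intro x
    obtain ⟨t, htT, htd⟩ := hTd.exists_dist_lt (f x)
      (by have := hεpos x; linarith : (0:ℝ) < ε x / 4)
    obtain ⟨q, hq1, hq2⟩ := exists_rat_btwn (by have := hεpos x; linarith : ε x / 2 < ε x)
    obtain ⟨k, hk⟩ := hu (⟨t, htT⟩, q)
    refine ⟨k, ?_, ?_, ?_⟩ <;> simp only [hk, Set.mem_setOf_eq]
    · rw [← dist_eq_norm]; exact htd
    · exact hq2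
    · linarith
  · intro k z hz cc hcc
    obtain ⟨hz1, hz2, hz3⟩ := hz
    have hrk : 0 < ((u k).2 : ℝ) := by have := hεpos z; linarith
    rw [Metric.mem_ball, if_pos hrk, dist_eq_norm] at hcc
    have htri : ‖f z - cc‖ ≤ ‖f z - ((u k).1 : EuclideanSpace ℝ (Fin (n+1)))‖ +
        ‖((u k).1 : EuclideanSpace ℝ (Fin (n+1))) - cc‖ := by
      have h := norm_add_le (f z - ((u k).1 : EuclideanSpace ℝ (Fin (n+1))))
        (((u k).1 : EuclideanSpace ℝ (Fin (n+1))) - cc)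
      simpa using h
    have hQc : ‖((u k).1 : EuclideanSpace ℝ (Fin (n+1))) - cc‖ < ((u k).2 : ℝ) / 4 := by
      rwa [norm_sub_rev]
    linarith

theorem stmt_3 (n : ℕ) (X : Type) [TopologicalSpace X] [NormalSpace X]
    (hdim : CovDimLE X n) (y : EuclideanSpace ℝ (Fin (n + 1)))
    (f : X → EuclideanSpace ℝ (Fin (n + 1))) (hf : Continuous f)
    (ε : X → ℝ) (hε : Continuous ε) (hεpos : ∀ x, 0 < ε x) :
    ∃ g : X → EuclideanSpace ℝ (Fin (n + 1)), Continuous g ∧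
      ∀ x, ‖f x - g x‖ < ε x ∧ g x ≠ y := by
  classical
  obtain ⟨D, B, hDo, hBo, hBne, hDcov, hDB⟩ := aux_cover f hf ε hε hεpos
  obtain ⟨W, hWo, hWD, hWcov, hWfin⟩ := aux_refine hdim D hDo hDcov
  obtain ⟨W', hW'o, hW'W, hW'cov, hW'lf⟩ := aux_locfin W hWo hWcov (fun x => (hWfin x).1)
  obtain ⟨b, hbsub⟩ := BumpCovering.exists_isSubordinate_of_locallyFinite isClosed_univ W' hW'o
    hW'lf (fun x _ => Set.mem_iUnion.2 (hW'cov x))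
  set ρ := b.toPartitionOfUnity with hρ
  have hρsub : ρ.IsSubordinate W' := hbsub.toPartitionOfUnity
  obtain ⟨c, hcB, hcgen⟩ := aux_exists_genpos y B hBo hBne
  refine ⟨fun x => ∑ᶠ k, ρ k x • c k, ?_, ?_⟩
  · exact hρsub.continuous_finsum_smul hW'o fun i => continuousOn_const
  intro x
  set F' := ρ.finsupport x with hF'
  have hsum : ∑ k ∈ F', ρ k x = 1 := ρ.sum_finsupport (Set.mem_univ x)
  have hgx : ∑ᶠ k, ρ k x • c k = ∑ k ∈ F', ρ k x • c k :=
    (ρ.sum_finsupport_smul_eq_finsum (fun k _ => c k)).symm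
  have hxW' : ∀ k ∈ F', x ∈ W' k := by
    intro k hk
    have hne : ρ k x ≠ 0 := by
      rw [hF', ρ.mem_finsupport] at hk
      exact hk
    exact hρsub k (subset_closure (Function.mem_support.2 hne))
  have hnorm : ∀ k ∈ F', ‖f x - c k‖ < ε x / 2 := by
    intro k hk
    exact hDB k x (hWD k (hW'W k (hxW' k hk))) (c k) (hcB k)
  have hcard : F'.card ≤ n + 1 := by
    have hsubW : (F' : Set ℕ) ⊆ {k | x ∈ W k} := fun k hk => hW'W k (hxW' k hk)
    calc F'.card = (F' : Set ℕ).ncard := (Set.ncard_coe_finset F').symm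
      _ ≤ {k | x ∈ W k}.ncard := Set.ncard_le_ncard hsubW (hWfin x).1
      _ ≤ n + 1 := (hWfin x).2
  have hyaff : y ∉ affineSpan ℝ (c '' (F' : Set ℕ)) := hcgen F' hcard
  constructor
  · show ‖f x - ∑ᶠ k, ρ k x • c k‖ < ε x
    have key : ∑ k ∈ F', ρ k x • (f x - c k) = f x - ∑ k ∈ F', ρ k x • c k := by
      simp only [smul_sub]
      rw [Finset.sum_sub_distrib, ← Finset.sum_smul, hsum, one_smul]
    rw [hgx, ← key]
    calc ‖∑ k ∈ F', ρ k x • (f x - c k)‖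
        ≤ ∑ k ∈ F', ‖ρ k x • (f x - c k)‖ := norm_sum_le _ _
      _ = ∑ k ∈ F', ρ k x * ‖f x - c k‖ := by
          refine Finset.sum_congr rfl fun k _ => ?_
          rw [norm_smul, Real.norm_of_nonneg (ρ.nonneg k x)]
      _ ≤ ∑ k ∈ F', ρ k x * (ε x / 2) := by
          refine Finset.sum_le_sum fun k hk => ?_
          exact mul_le_mul_of_nonneg_left (le_of_lt (hnorm k hk)) (ρ.nonneg k x)
      _ = ε x / 2 := by rw [← Finset.sum_mul, hsum, one_mul]
      _ < ε x := by have := hεpos x; linarith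
  · intro hgy
    replace hgy : ∑ᶠ k, ρ k x • c k = y := hgy
    apply hyaff
    rw [← hgy, hgx]
    have hcm : F'.centerMass (fun k => ρ k x) c ∈ convexHull ℝ (c '' (F' : Set ℕ)) :=
      Finset.centerMass_mem_convexHull _ (fun k _ => ρ.nonneg k x) (by rw [hsum]; norm_num)
        (fun k hk => Set.mem_image_of_mem c hk)
    rw [Finset.centerMass_eq_of_sum_1 _ _ hsum] at hcm
    exact convexHull_subset_affineSpan _ hcm
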